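/- Let M be an irreducible nonnegative integer n×n matrix and P a permutation matrix with M = P M^T and such that M, M^T, P pairwise commute. Suppose the matrix polynomial q(t) = I − Mt + Pt² has all roots on the unit circle, where a root is λ with det q(λ) = 0. Then the spectral radius ρ(M) ≤ 2, and each eigenvalue δ of M satisfies |δ| ≤ 2. Conversely, if ρ(M) > 2 then q(t) has a root off the unit circle. -/

import Mathlib

open Matrix

lemma quad_key (n : ℕ) (A Q : Matrix (Fin n) (Fin n) ℂ) (hcomm : A * Q = Q * A)
    (k : ℕ) (hk : 0 < k) (hQk : Q ^ k = 1)
    (δ : ℂ) (hdet : (A - δ • 1).det = 0) (hδ : 2 < ‖δ‖) :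
    ∃ z : ℂ, ((1 : Matrix (Fin n) (Fin n) ℂ) - z • A + z ^ 2 • Q).det = 0 ∧
      ‖z‖ ≠ 1 := by
  -- eigenvector of A
  obtain ⟨v, hv0, hv⟩ := (Matrix.exists_mulVec_eq_zero_iff).2 hdet
  rw [Matrix.sub_mulVec, sub_eq_zero, Matrix.smul_mulVec, Matrix.one_mulVec] at hv
  -- eigenspace setup
  set f := Matrix.mulVecLin A with hf
  set g := Matrix.mulVecLin Q with hg
  set E := Module.End.eigenspace f δ with hE
  have hvE : v ∈ E := by
    rw [Module.End.mem_eigenspace_iff]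
    simpa [hf, Matrix.mulVecLin_apply] using hv
  have hmaps : ∀ x ∈ E, g x ∈ E := by
    intro x hx
    rw [Module.End.mem_eigenspace_iff] at hx ⊢
    have : f (g x) = g (f x) := by
      simp only [hf, hg, Matrix.mulVecLin_apply, Matrix.mulVec_mulVec, hcomm]
    rw [this, hx, _root_.map_smul]
  haveI : Nontrivial E := ⟨⟨⟨v, hvE⟩, 0, fun h => hv0 (by simpa [Subtype.ext_iff] using h)⟩⟩
  set g' : E →ₗ[ℂ] E := g.restrict hmaps with hg'
  obtain ⟨ζ, hζ⟩ := Module.End.exists_eigenvalue g'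
  obtain ⟨w, hw⟩ := hζ.exists_hasEigenvector
  obtain ⟨u, huE⟩ := w
  have hu0 : u ≠ 0 := fun h => hw.2 (by simpa [Subtype.ext_iff] using h)
  have hQu : Q.mulVec u = ζ • u := by
    have h1 := congrArg (Subtype.val) hw.apply_eq_smul
    simpa [hg', hg, LinearMap.restrict_apply, Matrix.mulVecLin_apply] using h1
  have hAu : A.mulVec u = δ • u := by
    have h2 := huE
    rw [Module.End.mem_eigenspace_iff] at h2
    simpa [hf, Matrix.mulVecLin_apply] using h2
  -- ζ is a root of unity
  have hpow : ∀ m : ℕ, (Q ^ m).mulVec u = ζ ^ m • u := by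
    intro m
    induction m with
    | zero => simp [Matrix.one_mulVec]
    | succ m ih =>
      rw [pow_succ, ← Matrix.mulVec_mulVec, hQu, Matrix.mulVec_smul, ih, pow_succ,
        smul_smul, mul_comm]
  have hζk : ζ ^ k = 1 := by
    have h1 := hpow k
    rw [hQk, Matrix.one_mulVec] at h1
    have : (ζ ^ k - 1) • u = 0 := by rw [sub_smul, one_smul, ← h1, sub_self]
    rcases smul_eq_zero.mp this with h | h
    · exact sub_eq_zero.mp h
    · exact absurd h hu0
  have hζ0 : ζ ≠ 0 := by
    intro h
    rw [h, zero_pow hk.ne'] at hζk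
    exact zero_ne_one hζk
  have habsζ : ‖ζ‖ = 1 := Complex.norm_eq_one_of_pow_eq_one hζk hk.ne'
  -- roots of the quadratic
  obtain ⟨s, hs⟩ : ∃ s : ℂ, s ^ 2 = δ ^ 2 - 4 * ζ :=
    IsAlgClosed.exists_pow_nat_eq (δ ^ 2 - 4 * ζ) (by norm_num : 0 < 2)
  set z₁ := (δ + s) / (2 * ζ) with hz₁
  set z₂ := (δ - s) / (2 * ζ) with hz₂
  have h2ζ : (2 : ℂ) * ζ ≠ 0 := by
    simp [hζ0]
  have hroot : ∀ z : ℂ, 1 - δ * z + ζ * z ^ 2 = 0 →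
      ((1 : Matrix (Fin n) (Fin n) ℂ) - z • A + z ^ 2 • Q).det = 0 := by
    intro z hz
    apply Matrix.exists_mulVec_eq_zero_iff.mp
    refine ⟨u, hu0, ?_⟩
    rw [Matrix.add_mulVec, Matrix.sub_mulVec, Matrix.one_mulVec,
      Matrix.smul_mulVec, Matrix.smul_mulVec, hAu, hQu]
    have heq : u - z • δ • u + z ^ 2 • ζ • u = (1 - δ * z + ζ * z ^ 2) • u := by
      simp [sub_smul, add_smul, one_smul, smul_smul, mul_comm]
    rw [heq, hz, zero_smul]
  have hr1 : 1 - δ * z₁ + ζ * z₁ ^ 2 = 0 := by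
    rw [hz₁]
    field_simp
    linear_combination hs
  have hr2 : 1 - δ * z₂ + ζ * z₂ ^ 2 = 0 := by
    rw [hz₂]
    field_simp
    linear_combination hs
  have hsum : z₁ + z₂ = δ / ζ := by
    rw [hz₁, hz₂]
    field_simp
    ring
  by_contra hcon
  push_neg at hcon
  have ha1 : ‖z₁‖ = 1 := hcon z₁ (hroot z₁ hr1)
  have ha2 : ‖z₂‖ = 1 := hcon z₂ (hroot z₂ hr2)
  have : ‖z₁ + z₂‖ ≤ 2 := by
    calc ‖z₁ + z₂‖ ≤ ‖z₁‖ + ‖z₂‖ := norm_add_le _ _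
    _ = 2 := by rw [ha1, ha2]; norm_num
  rw [hsum, norm_div, habsζ, div_one] at this
  linarith


lemma permMatrix_pow_eq (n : ℕ) (σ : Equiv.Perm (Fin n)) (m : ℕ) :
    ((σ ^ m).permMatrix ℂ) = (σ.permMatrix ℂ) ^ m := by
  induction m with
  | zero =>
    simp [Equiv.Perm.permMatrix, Equiv.Perm.one_def, Equiv.toPEquiv_refl, PEquiv.toMatrix_refl]
  | succ m ih =>
    have h1 : σ ^ (m + 1) = σ ^ m * σ := pow_succ σ m
    have h2 : σ ^ m * σ = σ.trans (σ ^ m) := rfl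
    rw [h1, pow_succ']
    rw [Equiv.Perm.permMatrix] at *
    rw [h2, Equiv.toPEquiv_trans, PEquiv.toMatrix_trans, ih]




/-- Let `M` be an irreducible nonnegative integer matrix and `P` a permutation matrix with
`M = P Mᵀ` and `M`, `Mᵀ`, `P` pairwise commuting.  If the matrix polynomial
`q(t) = I − Mt + Pt²` has all of its roots (the `λ ∈ ℂ` with `det q(λ) = 0`) on the unit
circle, then every eigenvalue `δ` of `M` satisfies `|δ| ≤ 2` (so the spectral radius
`ρ(M) ≤ 2`).  Conversely, if some eigenvalue has `|δ| > 2` (i.e. `ρ(M) > 2`), then `q(t)`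
has a root off the unit circle. -/
theorem dim2_roots_on_circle_iff_spectral_radius (n : ℕ)
    (M P : Matrix (Fin n) (Fin n) ℤ) (σ : Equiv.Perm (Fin n))
    (hP : P = fun i j => if σ i = j then 1 else 0)
    (hnn : ∀ i j, 0 ≤ M i j)
    (hirr : ∀ s : Set (Fin n), s.Nonempty → s ≠ Set.univ → ∃ i ∈ s, ∃ j, j ∉ s ∧ M i j ≠ 0)
    (hMPMt : M = P * M.transpose)
    (hMMt : M * M.transpose = M.transpose * M)
    (hMP : M * P = P * M)
    (hMtP : M.transpose * P = P * M.transpose) :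
    ((∀ z : ℂ,
        ((1 : Matrix (Fin n) (Fin n) ℂ) - z • M.map (Int.cast : ℤ → ℂ) +
          z ^ 2 • P.map (Int.cast : ℤ → ℂ)).det = 0 → ‖z‖ = 1) →
      ∀ δ : ℂ, (M.map (Int.cast : ℤ → ℂ) - δ • 1).det = 0 → ‖δ‖ ≤ 2) ∧
    ((∃ δ : ℂ, (M.map (Int.cast : ℤ → ℂ) - δ • 1).det = 0 ∧ 2 < ‖δ‖) →
      ∃ z : ℂ,
        ((1 : Matrix (Fin n) (Fin n) ℂ) - z • M.map (Int.cast : ℤ → ℂ) +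
          z ^ 2 • P.map (Int.cast : ℤ → ℂ)).det = 0 ∧ ‖z‖ ≠ 1) := by
  have hmapmul : ∀ X Y : Matrix (Fin n) (Fin n) ℤ,
      (X * Y).map (Int.cast : ℤ → ℂ) = X.map Int.cast * Y.map Int.cast := fun X Y =>
    Matrix.map_mul (f := Int.castRingHom ℂ)
  have hcomm : M.map (Int.cast : ℤ → ℂ) * P.map (Int.cast : ℤ → ℂ) =
      P.map (Int.cast : ℤ → ℂ) * M.map (Int.cast : ℤ → ℂ) := by
    rw [← hmapmul, ← hmapmul, hMP]
  have hQperm : P.map (Int.cast : ℤ → ℂ) = σ.permMatrix ℂ := by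
    ext i j
    rw [Matrix.map_apply]
    simp [hP, Matrix.map_apply, Equiv.Perm.permMatrix, PEquiv.toMatrix, Equiv.toPEquiv,
      apply_ite (Int.cast : ℤ → ℂ)]
  have hQk : (P.map (Int.cast : ℤ → ℂ)) ^ (orderOf σ) = 1 := by
    rw [hQperm, ← permMatrix_pow_eq, pow_orderOf_eq_one]
    simp [Equiv.Perm.permMatrix, Equiv.Perm.one_def, Equiv.toPEquiv_refl, PEquiv.toMatrix_refl]
  have key2 : (∃ δ : ℂ, (M.map (Int.cast : ℤ → ℂ) - δ • 1).det = 0 ∧ 2 < ‖δ‖) →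
      ∃ z : ℂ,
        ((1 : Matrix (Fin n) (Fin n) ℂ) - z • M.map (Int.cast : ℤ → ℂ) +
          z ^ 2 • P.map (Int.cast : ℤ → ℂ)).det = 0 ∧ ‖z‖ ≠ 1 := by
    rintro ⟨δ, hdet, hδ⟩
    exact quad_key n _ _ hcomm (orderOf σ) (orderOf_pos σ) hQk δ hdet hδ
  refine ⟨?_, key2⟩
  intro H δ hdet
  by_contra hgt
  push_neg at hgt
  obtain ⟨z, hz, hz1⟩ := key2 ⟨δ, hdet, hgt⟩
  exact hz1 (H z hz)
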